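/- With R n the number of symmetric noncrossing partial matchings on n points with no arc between adjacent points (symmetric under i ↦ n+1-i), for all n ≥ 1: R (2n+1) = R (2n) + R (2n-1). -/
import Mathlib


/-- A partial matching on `n` linearly ordered points (0-indexed), given as a finite
set of arcs `(i,j)` with `i + 2 ≤ j` (so no arc connects two adjacent points),
with all arc endpoints pairwise distinct. -/
def IsMatching (n : ℕ) (M : Finset (Fin n × Fin n)) : Prop :=
  (∀ p ∈ M, p.1.val + 2 ≤ p.2.val) ∧
  ∀ p ∈ M, ∀ q ∈ M, p ≠ q →
    p.1 ≠ q.1 ∧ p.1 ≠ q.2 ∧ p.2 ≠ q.1 ∧ p.2 ≠ q.2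

/-- No two arcs cross. -/
def Noncrossing (n : ℕ) (M : Finset (Fin n × Fin n)) : Prop :=
  ∀ p ∈ M, ∀ q ∈ M, ¬(p.1 < q.1 ∧ q.1 < p.2 ∧ p.2 < q.2)

/-- The matching is invariant under the reflection `i ↦ n+1-i` (here `Fin.rev`). -/
def SymmMatching (n : ℕ) (M : Finset (Fin n × Fin n)) : Prop :=
  ∀ p ∈ M, (p.2.rev, p.1.rev) ∈ M

/-- The number of symmetric noncrossing adjacent-arc-free partial matchings. -/
noncomputable def R (n : ℕ) : ℕ :=
  Nat.card {M : Finset (Fin n × Fin n) // IsMatching n M ∧ Noncrossing n M ∧ SymmMatching n M}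

/- ### Auxiliary development -/

abbrev Good (k : ℕ) (M : Finset (Fin k × Fin k)) : Prop :=
  IsMatching k M ∧ Noncrossing k M ∧ SymmMatching k M

/-- In a symmetric matching on an odd number of points, the center point is unmatched. -/
lemma center_free {N m : ℕ} (hN : N = 2 * m + 1) {M : Finset (Fin N × Fin N)}
    (h1 : IsMatching N M) (h3 : SymmMatching N M) :
    ∀ p ∈ M, p.1.val ≠ m ∧ p.2.val ≠ m := by
  intro p hp
  have hqmem := h3 p hp
  have hgap := h1.1 p hp
  have h2v : (p.2.rev).val = N - (p.2.val + 1) := Fin.val_rev _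
  have h1v : (p.1.rev).val = N - (p.1.val + 1) := Fin.val_rev _
  have hlt1 := p.1.isLt
  have hlt2 := p.2.isLt
  constructor
  · intro ha
    have hne : p ≠ (p.2.rev, p.1.rev) := by
      intro h
      have h2 : p.2 = p.1.rev := congrArg Prod.snd h
      have := congrArg Fin.val h2
      omega
    have h4 := (h1.2 p hp _ hqmem hne).2.1
    exact h4 (Fin.ext (by simp only [h1v]; omega))
  · intro hb
    have hne : p ≠ (p.2.rev, p.1.rev) := by
      intro h
      have h2 : p.1 = p.2.rev := congrArg Prod.fst h
      have := congrArg Fin.val h2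
      omega
    have h4 := (h1.2 p hp _ hqmem hne).2.2.1
    exact h4 (Fin.ext (by simp only [h2v]; omega))

/-- Transfer of the three properties along a relabeling map which is monotone,
gap-preserving, and reflection-equivariant on the relevant points. -/
lemma transfer {a b : ℕ} (S : Fin a → Prop) (f : Fin a → Fin b)
    (hmono : ∀ i j : Fin a, S i → S j → i.val < j.val → (f i).val < (f j).val)
    (hrev : ∀ i : Fin a, S i → f i.rev = (f i).rev)
    {M : Finset (Fin a × Fin a)}
    (hS : ∀ p ∈ M, S p.1 ∧ S p.2)
    (hgap : ∀ p ∈ M, (f p.1).val + 2 ≤ (f p.2).val)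
    (h1 : IsMatching a M) (h2 : Noncrossing a M) (h3 : SymmMatching a M) :
    Good b (M.image (Prod.map f f)) := by
  classical
  have hinj : ∀ i j : Fin a, S i → S j → f i = f j → i = j := by
    intro i j hi hj hf
    rcases lt_trichotomy i.val j.val with h | h | h
    · exact absurd (congrArg Fin.val hf) (by have := hmono i j hi hj h; omega)
    · exact Fin.ext h
    · exact absurd (congrArg Fin.val hf) (by have := hmono j i hj hi h; omega)
  have horder : ∀ i j : Fin a, S i → S j → (f i).val < (f j).val → i.val < j.val := by
    intro i j hi hj hf
    rcases lt_trichotomy i.val j.val with h | h | h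
    · exact h
    · exact absurd hf (by rw [Fin.ext h]; omega)
    · exact absurd hf (by have := hmono j i hj hi h; omega)
  refine ⟨⟨?_, ?_⟩, ?_, ?_⟩
  · intro p hp
    obtain ⟨⟨x, y⟩, hq, rfl⟩ := Finset.mem_image.mp hp
    exact hgap (x, y) hq
  · intro p hp q hq hne
    obtain ⟨⟨x, y⟩, hp', rfl⟩ := Finset.mem_image.mp hp
    obtain ⟨⟨z, w⟩, hq', rfl⟩ := Finset.mem_image.mp hq
    have hne' : (x, y) ≠ (z, w) := fun h => hne (by rw [h])
    have hd := h1.2 _ hp' _ hq' hne'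
    obtain ⟨hS1, hS2⟩ := hS _ hp'
    obtain ⟨hS3, hS4⟩ := hS _ hq'
    exact ⟨fun h => hd.1 (hinj _ _ hS1 hS3 h), fun h => hd.2.1 (hinj _ _ hS1 hS4 h),
      fun h => hd.2.2.1 (hinj _ _ hS2 hS3 h), fun h => hd.2.2.2 (hinj _ _ hS2 hS4 h)⟩
  · intro p hp q hq hc
    obtain ⟨⟨x, y⟩, hp', rfl⟩ := Finset.mem_image.mp hp
    obtain ⟨⟨z, w⟩, hq', rfl⟩ := Finset.mem_image.mp hq
    obtain ⟨hS1, hS2⟩ := hS _ hp'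
    obtain ⟨hS3, hS4⟩ := hS _ hq'
    obtain ⟨c1, c2, c3⟩ := hc
    rw [Fin.lt_def] at c1 c2 c3
    exact h2 _ hp' _ hq' ⟨Fin.lt_def.mpr (horder _ _ hS1 hS3 c1),
      Fin.lt_def.mpr (horder _ _ hS3 hS2 c2), Fin.lt_def.mpr (horder _ _ hS2 hS4 c3)⟩
  · intro p hp
    obtain ⟨⟨x, y⟩, hp', rfl⟩ := Finset.mem_image.mp hp
    have hsym := h3 _ hp'
    obtain ⟨hS1, hS2⟩ := hS _ hp'
    have : Prod.map f f (y.rev, x.rev) ∈ M.image (Prod.map f f) :=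
      Finset.mem_image_of_mem _ hsym
    simpa [Prod.map, hrev x hS1, hrev y hS2] using this

/- ### The relabeling maps -/

/-- Insert a point at position `n` (the center) of `2*n` points. -/
def E1 (n : ℕ) (i : Fin (2 * n)) : Fin (2 * n + 1) :=
  ⟨if i.val < n then i.val else i.val + 1, by have := i.isLt; split <;> omega⟩

/-- Insert points at positions `n-1` and `n+1` of `2*n-1` points. -/
def E2 (n : ℕ) (i : Fin (2 * n - 1)) : Fin (2 * n + 1) :=
  ⟨if i.val < n - 1 then i.val else if i.val = n - 1 then n else i.val + 2, by
    have := i.isLt; split_ifs <;> omega⟩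

/-- Delete the center point of `2*n+1` points. -/
def G1 (n : ℕ) (hn : 1 ≤ n) (i : Fin (2 * n + 1)) : Fin (2 * n) :=
  ⟨if i.val < n then i.val else i.val - 1, by have := i.isLt; split <;> omega⟩

/-- Delete the points at positions `n-1` and `n+1` of `2*n+1` points. -/
def G2 (n : ℕ) (hn : 1 ≤ n) (i : Fin (2 * n + 1)) : Fin (2 * n - 1) :=
  ⟨if i.val < n then min i.val (n - 1) else i.val - 2, by have := i.isLt; split <;> omega⟩

/-- The central arc `(n-1, n+1)`. -/
def P0 (n : ℕ) (hn : 1 ≤ n) : Fin (2 * n + 1) × Fin (2 * n + 1) :=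
  (⟨n - 1, by omega⟩, ⟨n + 1, by omega⟩)

lemma P0_fst (n : ℕ) (hn : 1 ≤ n) : ((P0 n hn).1).val = n - 1 := rfl

lemma P0_snd (n : ℕ) (hn : 1 ≤ n) : ((P0 n hn).2).val = n + 1 := rfl

lemma E1_val (n : ℕ) (i : Fin (2 * n)) :
    (E1 n i).val = if i.val < n then i.val else i.val + 1 := rfl

lemma E2_val (n : ℕ) (i : Fin (2 * n - 1)) :
    (E2 n i).val = if i.val < n - 1 then i.val else if i.val = n - 1 then n else i.val + 2 := rfl

lemma G1_val (n : ℕ) (hn : 1 ≤ n) (i : Fin (2 * n + 1)) :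
    (G1 n hn i).val = if i.val < n then i.val else i.val - 1 := rfl

lemma G2_val (n : ℕ) (hn : 1 ≤ n) (i : Fin (2 * n + 1)) :
    (G2 n hn i).val = if i.val < n then min i.val (n - 1) else i.val - 2 := rfl

/- ### Forward direction (small → big) -/

lemma good_E1 (n : ℕ) {M : Finset (Fin (2 * n) × Fin (2 * n))} (h : Good (2 * n) M) :
    Good (2 * n + 1) (M.image (Prod.map (E1 n) (E1 n))) := by
  refine transfer (fun _ => True) (E1 n) ?_ ?_ (fun p _ => ⟨trivial, trivial⟩) ?_ h.1 h.2.1 h.2.2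
  · intro i j _ _ hij
    have hi := i.isLt; have hj := j.isLt
    simp only [E1_val]; split_ifs <;> omega
  · intro i _
    have hi := i.isLt
    apply Fin.ext
    rw [Fin.val_rev, E1_val, E1_val, Fin.val_rev]
    split_ifs <;> omega
  · intro p hp
    have hg := h.1.1 p hp
    have h1 := p.1.isLt; have h2 := p.2.isLt
    simp only [E1_val]; split_ifs <;> omega

lemma E2_range (n : ℕ) (hn : 1 ≤ n) (i : Fin (2 * n - 1)) :
    (E2 n i).val ≠ n - 1 ∧ (E2 n i).val ≠ n + 1 ∧ ((E2 n i).val = n → i.val = n - 1) := by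
  have hi := i.isLt
  rw [E2_val]
  split_ifs <;> omega

/-- Endpoints of arcs in the image of `E2` avoid `n-1`, `n`, `n+1`. -/
lemma E2_avoid (n : ℕ) (hn : 1 ≤ n) {M : Finset (Fin (2 * n - 1) × Fin (2 * n - 1))}
    (h : Good (2 * n - 1) M) :
    ∀ p ∈ M.image (Prod.map (E2 n) (E2 n)),
      (p.1.val ≠ n - 1 ∧ p.1.val ≠ n ∧ p.1.val ≠ n + 1) ∧
      (p.2.val ≠ n - 1 ∧ p.2.val ≠ n ∧ p.2.val ≠ n + 1) := by
  intro p hp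
  obtain ⟨⟨x, y⟩, hq, rfl⟩ := Finset.mem_image.mp hp
  have hc := center_free (m := n - 1) (by omega) h.1 h.2.2 (x, y) hq
  have hx := E2_range n hn x
  have hy := E2_range n hn y
  simp only [Prod.map] at *
  exact ⟨⟨hx.1, fun e => hc.1 (hx.2.2 e), hx.2.1⟩, ⟨hy.1, fun e => hc.2 (hy.2.2 e), hy.2.1⟩⟩

lemma good_insert (n : ℕ) (hn : 1 ≤ n) {M : Finset (Fin (2 * n - 1) × Fin (2 * n - 1))}
    (h : Good (2 * n - 1) M) :
    Good (2 * n + 1) (insert (P0 n hn) (M.image (Prod.map (E2 n) (E2 n)))) := by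
  have himg : Good (2 * n + 1) (M.image (Prod.map (E2 n) (E2 n))) := by
    refine transfer (fun _ => True) (E2 n) ?_ ?_ (fun p _ => ⟨trivial, trivial⟩) ?_ h.1 h.2.1 h.2.2
    · intro i j _ _ hij
      have hi := i.isLt; have hj := j.isLt
      simp only [E2_val]; split_ifs <;> omega
    · intro i _
      have hi := i.isLt
      apply Fin.ext
      rw [Fin.val_rev, E2_val, E2_val, Fin.val_rev]
      split_ifs <;> omega
    · intro p hp
      have hg := h.1.1 p hp
      have h1 := p.1.isLt; have h2 := p.2.isLt
      simp only [E2_val]; split_ifs <;> omega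
  have hav := E2_avoid n hn h
  refine ⟨⟨?_, ?_⟩, ?_, ?_⟩
  · intro p hp
    rcases Finset.mem_insert.mp hp with rfl | hp
    · show n - 1 + 2 ≤ n + 1; omega
    · exact himg.1.1 p hp
  · intro p hp q hq hne
    rcases Finset.mem_insert.mp hp with rfl | hp <;> rcases Finset.mem_insert.mp hq with rfl | hq
    · exact absurd rfl hne
    · have := hav q hq
      refine ⟨?_, ?_, ?_, ?_⟩ <;> intro e <;> have := congrArg Fin.val e <;>
        simp only [P0] at this <;> omega
    · have := hav p hp
      refine ⟨?_, ?_, ?_, ?_⟩ <;> intro e <;> have := congrArg Fin.val e <;>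
        simp only [P0] at this <;> omega
    · exact himg.1.2 p hp q hq hne
  · intro p hp q hq hc
    obtain ⟨c1, c2, c3⟩ := hc
    rw [Fin.lt_def] at c1 c2 c3
    rcases Finset.mem_insert.mp hp with rfl | hp
    · -- p = P0 : n-1 < q.1 < n+1 forces q.1 = n
      have hq1 : q.1.val = n := by simp only [P0] at c1 c2; omega
      rcases Finset.mem_insert.mp hq with rfl | hq
      · simp only [P0] at hq1; omega
      · exact (hav q hq).1.2.1 hq1
    · rcases Finset.mem_insert.mp hq with rfl | hq
      · -- q = P0 : p.1 < n-1 < p.2 < n+1 forces p.2 = n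
        have hp2 : p.2.val = n := by simp only [P0] at c2 c3; omega
        exact (hav p hp).2.2.1 hp2
      · exact himg.2.1 p hp q hq ⟨Fin.lt_def.mpr c1, Fin.lt_def.mpr c2, Fin.lt_def.mpr c3⟩
  · intro p hp
    rcases Finset.mem_insert.mp hp with rfl | hp
    · have : ((P0 n hn).2.rev, (P0 n hn).1.rev) = P0 n hn := by
        have e1 : (P0 n hn).2.rev = (P0 n hn).1 := by
          apply Fin.ext; rw [Fin.val_rev]; simp only [P0]; omega
        have e2 : (P0 n hn).1.rev = (P0 n hn).2 := by
          apply Fin.ext; rw [Fin.val_rev]; simp only [P0]; omega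
        rw [e1, e2]
      rw [this]
      exact Finset.mem_insert_self _ _
    · exact Finset.mem_insert_of_mem (himg.2.2 p hp)

lemma P0_not_mem_E1 (n : ℕ) (hn : 1 ≤ n) {M : Finset (Fin (2 * n) × Fin (2 * n))}
    (h : IsMatching (2 * n) M) : P0 n hn ∉ M.image (Prod.map (E1 n) (E1 n)) := by
  intro hmem
  obtain ⟨⟨x, y⟩, hq, he⟩ := Finset.mem_image.mp hmem
  have hx : (E1 n x) = (P0 n hn).1 := congrArg Prod.fst he
  have hy : (E1 n y) = (P0 n hn).2 := congrArg Prod.snd he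
  have hx' := congrArg Fin.val hx
  have hy' := congrArg Fin.val hy
  rw [E1_val] at hx' hy'
  simp only [P0] at hx' hy'
  have hxl := x.isLt; have hyl := y.isLt
  have hg := h.1 (x, y) hq
  simp only at hg
  split_ifs at hx' hy' <;> omega

lemma P0_not_mem_E2 (n : ℕ) (hn : 1 ≤ n) (M : Finset (Fin (2 * n - 1) × Fin (2 * n - 1))) :
    P0 n hn ∉ M.image (Prod.map (E2 n) (E2 n)) := by
  intro hmem
  obtain ⟨⟨x, y⟩, hq, he⟩ := Finset.mem_image.mp hmem
  have hx : (E2 n x) = (P0 n hn).1 := congrArg Prod.fst he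
  have hx' := congrArg Fin.val hx
  rw [E2_val] at hx'
  simp only [P0] at hx'
  have hxl := x.isLt
  split_ifs at hx' <;> omega

/- ### Backward direction (contractions) -/

lemma contract1 (n : ℕ) (hn : 1 ≤ n) {M' : Finset (Fin (2 * n + 1) × Fin (2 * n + 1))}
    (h : Good (2 * n + 1) M') (hp0 : P0 n hn ∉ M') :
    Good (2 * n) (M'.image (Prod.map (G1 n hn) (G1 n hn))) ∧
    (M'.image (Prod.map (G1 n hn) (G1 n hn))).image (Prod.map (E1 n) (E1 n)) = M' := by
  have hcf := center_free (m := n) rfl h.1 h.2.2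
  constructor
  · refine transfer (fun i => i.val ≠ n) (G1 n hn) ?_ ?_ hcf ?_ h.1 h.2.1 h.2.2
    · intro i j hi hj hij
      have h1 := i.isLt; have h2 := j.isLt
      simp only [G1_val]; split_ifs <;> omega
    · intro i hi
      have h1 := i.isLt
      apply Fin.ext
      rw [Fin.val_rev, G1_val, G1_val, Fin.val_rev]
      split_ifs <;> omega
    · intro p hp
      have hg := h.1.1 p hp
      have hc := hcf p hp
      have h1 := p.1.isLt; have h2 := p.2.isLt
      have hne : ¬(p.1.val = n - 1 ∧ p.2.val = n + 1) := by
        rintro ⟨e1, e2⟩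
        exact hp0 (by
          have : p = P0 n hn := Prod.ext (Fin.ext e1) (Fin.ext e2)
          rwa [← this])
      simp only [G1_val]; split_ifs <;> omega
  · rw [Finset.image_image]
    have heq : ∀ p ∈ M', (Prod.map (E1 n) (E1 n) ∘ Prod.map (G1 n hn) (G1 n hn)) p = p := by
      intro p hp
      have hc := hcf p hp
      have h1 := p.1.isLt; have h2 := p.2.isLt
      have e1 : E1 n (G1 n hn p.1) = p.1 := by
        apply Fin.ext; rw [E1_val, G1_val]; split_ifs <;> omega
      have e2 : E1 n (G1 n hn p.2) = p.2 := by
        apply Fin.ext; rw [E1_val, G1_val]; split_ifs <;> omega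
      show (E1 n (G1 n hn p.1), E1 n (G1 n hn p.2)) = p
      rw [e1, e2]
    calc M'.image (Prod.map (E1 n) (E1 n) ∘ Prod.map (G1 n hn) (G1 n hn))
        = M'.image id := Finset.image_congr (fun p hp => heq p hp)
      _ = M' := Finset.image_id

lemma contract2 (n : ℕ) (hn : 1 ≤ n) {M' : Finset (Fin (2 * n + 1) × Fin (2 * n + 1))}
    (h : Good (2 * n + 1) M') (hp0 : P0 n hn ∈ M') :
    Good (2 * n - 1) ((M'.erase (P0 n hn)).image (Prod.map (G2 n hn) (G2 n hn))) ∧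
    insert (P0 n hn)
      (((M'.erase (P0 n hn)).image (Prod.map (G2 n hn) (G2 n hn))).image
        (Prod.map (E2 n) (E2 n))) = M' := by
  classical
  have hcf := center_free (m := n) rfl h.1 h.2.2
  set Me := M'.erase (P0 n hn) with hMe
  have hsub : ∀ p ∈ Me, p ∈ M' := fun p hp => Finset.mem_of_mem_erase hp
  have hnep0 : ∀ p ∈ Me, p ≠ P0 n hn := fun p hp => Finset.ne_of_mem_erase hp
  -- endpoints of arcs in Me avoid n-1, n, n+1
  have havoid : ∀ p ∈ Me,
      (p.1.val ≠ n - 1 ∧ p.1.val ≠ n ∧ p.1.val ≠ n + 1) ∧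
      (p.2.val ≠ n - 1 ∧ p.2.val ≠ n ∧ p.2.val ≠ n + 1) := by
    intro p hp
    have hc := hcf p (hsub p hp)
    have hd := h.1.2 p (hsub p hp) (P0 n hn) hp0 (hnep0 p hp)
    refine ⟨⟨?_, hc.1, ?_⟩, ⟨?_, hc.2, ?_⟩⟩
    · intro e; exact hd.1 (Fin.ext e)
    · intro e; exact hd.2.1 (Fin.ext e)
    · intro e; exact hd.2.2.1 (Fin.ext e)
    · intro e; exact hd.2.2.2 (Fin.ext e)
  have hGe : Good (2 * n + 1) Me := by
    refine ⟨⟨fun p hp => h.1.1 p (hsub p hp),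
      fun p hp q hq hne => h.1.2 p (hsub p hp) q (hsub q hq) hne⟩,
      fun p hp q hq => h.2.1 p (hsub p hp) q (hsub q hq), ?_⟩
    intro p hp
    have hs := h.2.2 p (hsub p hp)
    rw [hMe, Finset.mem_erase]
    refine ⟨?_, hs⟩
    intro e
    have e1 : p.2.rev = (P0 n hn).1 := congrArg Prod.fst e
    have e2 : p.1.rev = (P0 n hn).2 := congrArg Prod.snd e
    have e1' := congrArg Fin.val e1
    have e2' := congrArg Fin.val e2
    rw [Fin.val_rev, P0_fst] at e1'
    rw [Fin.val_rev, P0_snd] at e2'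
    have h1 := p.1.isLt; have h2 := p.2.isLt
    refine hnep0 p hp (Prod.ext (Fin.ext ?_) (Fin.ext ?_))
    · rw [P0_fst]; omega
    · rw [P0_snd]; omega
  set S : Fin (2 * n + 1) → Prop := fun i => i.val ≠ n - 1 ∧ i.val ≠ n ∧ i.val ≠ n + 1 with hs
  constructor
  · refine transfer S (G2 n hn) ?_ ?_ havoid ?_ hGe.1 hGe.2.1 hGe.2.2
    · intro i j hi hj hij
      have h1 := i.isLt; have h2 := j.isLt
      obtain ⟨hi1, hi2, hi3⟩ := hi; obtain ⟨hj1, hj2, hj3⟩ := hj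
      simp only [G2_val]; split_ifs <;> omega
    · intro i hi
      obtain ⟨hi1, hi2, hi3⟩ := hi
      have h1 := i.isLt
      apply Fin.ext
      rw [Fin.val_rev, G2_val, G2_val, Fin.val_rev]
      split_ifs <;> omega
    · intro p hp
      have hg := hGe.1.1 p hp
      obtain ⟨⟨ha1, ha2, ha3⟩, ⟨hb1, hb2, hb3⟩⟩ := havoid p hp
      have h1 := p.1.isLt; have h2 := p.2.isLt
      simp only [G2_val]; split_ifs <;> omega
  · rw [Finset.image_image]
    have heq : ∀ p ∈ Me, (Prod.map (E2 n) (E2 n) ∘ Prod.map (G2 n hn) (G2 n hn)) p = p := by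
      intro p hp
      obtain ⟨⟨ha1, ha2, ha3⟩, ⟨hb1, hb2, hb3⟩⟩ := havoid p hp
      have h1 := p.1.isLt; have h2 := p.2.isLt
      have e1 : E2 n (G2 n hn p.1) = p.1 := by
        apply Fin.ext; rw [E2_val, G2_val]; split_ifs <;> omega
      have e2 : E2 n (G2 n hn p.2) = p.2 := by
        apply Fin.ext; rw [E2_val, G2_val]; split_ifs <;> omega
      show (E2 n (G2 n hn p.1), E2 n (G2 n hn p.2)) = p
      rw [e1, e2]
    have himg : Me.image (Prod.map (E2 n) (E2 n) ∘ Prod.map (G2 n hn) (G2 n hn)) = Me := by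
      have h' : Me.image (Prod.map (E2 n) (E2 n) ∘ Prod.map (G2 n hn) (G2 n hn)) = Me.image id :=
        Finset.image_congr (fun p hp => heq p hp)
      rw [h', Finset.image_id]
    rw [himg, Finset.insert_erase hp0]

/- ### Injectivity helpers -/

lemma E1_inj (n : ℕ) : Function.Injective (E1 n) := by
  intro i j h
  have := congrArg Fin.val h
  rw [E1_val, E1_val] at this
  have h1 := i.isLt; have h2 := j.isLt
  apply Fin.ext
  split_ifs at this <;> omega

lemma E2_inj (n : ℕ) : Function.Injective (E2 n) := by
  intro i j h
  have := congrArg Fin.val h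
  rw [E2_val, E2_val] at this
  have h1 := i.isLt; have h2 := j.isLt
  apply Fin.ext
  split_ifs at this <;> omega

/- ### Main counting lemma -/

lemma main_lemma (n : ℕ) (hn : 1 ≤ n) :
    Nat.card {M : Finset (Fin (2 * n + 1) × Fin (2 * n + 1)) // Good (2 * n + 1) M} =
    Nat.card {M : Finset (Fin (2 * n) × Fin (2 * n)) // Good (2 * n) M} +
    Nat.card {M : Finset (Fin (2 * n - 1) × Fin (2 * n - 1)) // Good (2 * n - 1) M} := by
  classical
  let φ : {M : Finset (Fin (2 * n) × Fin (2 * n)) // Good (2 * n) M} ⊕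
      {M : Finset (Fin (2 * n - 1) × Fin (2 * n - 1)) // Good (2 * n - 1) M} →
      {M : Finset (Fin (2 * n + 1) × Fin (2 * n + 1)) // Good (2 * n + 1) M} := fun x =>
    match x with
    | Sum.inl ⟨M, hM⟩ => ⟨M.image (Prod.map (E1 n) (E1 n)), good_E1 n hM⟩
    | Sum.inr ⟨M, hM⟩ => ⟨insert (P0 n hn) (M.image (Prod.map (E2 n) (E2 n))),
        good_insert n hn hM⟩
  have hinj : Function.Injective φ := by
    rintro (⟨M1, h1⟩ | ⟨M1, h1⟩) (⟨M2, h2⟩ | ⟨M2, h2⟩) h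
    · have hv : M1.image (Prod.map (E1 n) (E1 n)) = M2.image (Prod.map (E1 n) (E1 n)) :=
        congrArg Subtype.val h
      have := Finset.image_injective ((E1_inj n).prodMap (E1_inj n)) hv
      exact congrArg Sum.inl (Subtype.ext this)
    · have hv : M1.image (Prod.map (E1 n) (E1 n)) =
          insert (P0 n hn) (M2.image (Prod.map (E2 n) (E2 n))) := congrArg Subtype.val h
      exact absurd (hv ▸ Finset.mem_insert_self _ _) (P0_not_mem_E1 n hn h1.1)
    · have hv : insert (P0 n hn) (M1.image (Prod.map (E2 n) (E2 n))) =
          M2.image (Prod.map (E1 n) (E1 n)) := congrArg Subtype.val h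
      exact absurd (hv ▸ Finset.mem_insert_self _ _) (P0_not_mem_E1 n hn h2.1)
    · have hv : insert (P0 n hn) (M1.image (Prod.map (E2 n) (E2 n))) =
          insert (P0 n hn) (M2.image (Prod.map (E2 n) (E2 n))) := congrArg Subtype.val h
      have h1' := P0_not_mem_E2 n hn M1
      have h2' := P0_not_mem_E2 n hn M2
      have : M1.image (Prod.map (E2 n) (E2 n)) = M2.image (Prod.map (E2 n) (E2 n)) := by
        have := congrArg (fun s => Finset.erase s (P0 n hn)) hv
        simpa [Finset.erase_insert h1', Finset.erase_insert h2'] using this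
      have := Finset.image_injective ((E2_inj n).prodMap (E2_inj n)) this
      exact congrArg Sum.inr (Subtype.ext this)
  have hsurj : Function.Surjective φ := by
    rintro ⟨M', hM'⟩
    by_cases hp : P0 n hn ∈ M'
    · obtain ⟨hg, he⟩ := contract2 n hn hM' hp
      exact ⟨Sum.inr ⟨_, hg⟩, Subtype.ext he⟩
    · obtain ⟨hg, he⟩ := contract1 n hn hM' hp
      exact ⟨Sum.inl ⟨_, hg⟩, Subtype.ext he⟩
  calc Nat.card {M : Finset (Fin (2 * n + 1) × Fin (2 * n + 1)) // Good (2 * n + 1) M}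
      = Nat.card ({M : Finset (Fin (2 * n) × Fin (2 * n)) // Good (2 * n) M} ⊕
        {M : Finset (Fin (2 * n - 1) × Fin (2 * n - 1)) // Good (2 * n - 1) M}) :=
        (Nat.card_congr (Equiv.ofBijective φ ⟨hinj, hsurj⟩)).symm
    _ = _ := Nat.card_sum

theorem statement2 : ∀ n : ℕ, 1 ≤ n → R (2 * n + 1) = R (2 * n) + R (2 * n - 1) := by
  intro n hn
  unfold R
  exact main_lemma n hn
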